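/- Let G = (V, E, τ) be an order-preserving temporal unit interval graph with compatible order <_V, and let v_{i'} ≤_V v_i <_V v_j ≤_V v_{j'}. Then every temporal (v_i, v_j)-separator in G is also a temporal (v_{i'}, v_{j'})-separator in G. -/

import Mathlib

/-- A temporal graph: a set of time-edges over vertex set `V`, with time labels
in `{1, ..., tau}`. -/
structure TemporalGraph (V : Type*) where
  E : Sym2 V → ℕ → Prop
  tau : ℕ
  valid : ∀ e t, E e t → 1 ≤ t ∧ t ≤ tau

namespace TemporalGraph

variable {V : Type*}

/-- `G − S`: delete the vertices of `S` (i.e. all time-edges incident to `S`). -/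
def del (G : TemporalGraph V) (S : Set V) : TemporalGraph V where
  E e t := G.E e t ∧ ∀ v ∈ e, v ∉ S
  tau := G.tau
  valid e t h := G.valid e t h.1

/-- `vs` (the visited vertices, in order) together with the time labels `ts`
form a temporal `(s,z)`-path: consecutive vertices are joined by time-edges,
the labels are non-decreasing, and the visited vertices are pairwise distinct. -/
def IsTempPath (G : TemporalGraph V) (s z : V) (vs : List V) (ts : List ℕ) : Prop :=
  vs.length = ts.length + 1 ∧ vs.Nodup ∧ vs.head? = some s ∧ vs.getLast? = some z ∧
  List.Chain' (· ≤ ·) ts ∧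
  ∀ (i : ℕ) (hts : i < ts.length) (hvs : i + 1 < vs.length),
    G.E s(vs.get ⟨i, Nat.lt_of_succ_lt hvs⟩, vs.get ⟨i + 1, hvs⟩) (ts.get ⟨i, hts⟩)

/-- `w` is reachable from `s` by a temporal path. -/
def Reach (G : TemporalGraph V) (s w : V) : Prop :=
  ∃ vs ts, G.IsTempPath s w vs ts

/-- `w` is reachable from `s` by a temporal path with arrival time at most `t`. -/
def ReachBy (G : TemporalGraph V) (s w : V) (t : ℕ) : Prop :=
  ∃ vs ts, G.IsTempPath s w vs ts ∧ ∀ t' ∈ ts, t' ≤ t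

/-- `S` is a temporal `(s,z)`-separator: no temporal `(s,z)`-path in `G − S`. -/
def IsSep (G : TemporalGraph V) (s z : V) (S : Set V) : Prop :=
  ¬ ∃ vs ts, (G.del S).IsTempPath s z vs ts

/-- The underlying static graph of a temporal graph. -/
def underlying (G : TemporalGraph V) : SimpleGraph V where
  Adj v w := v ≠ w ∧ ∃ t, G.E s(v, w) t
  symm := ⟨fun v w ⟨hne, t, ht⟩ => ⟨hne.symm, t, by rw [Sym2.eq_swap]; exact ht⟩⟩
  loopless := ⟨fun v h => h.1 rfl⟩

/-- Concatenation `G₁ ∘ G₂`: the time labels of `G₂` are shifted by `G₁.tau`. -/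
def concat (G₁ G₂ : TemporalGraph V) : TemporalGraph V where
  E e t := G₁.E e t ∨ (G₁.tau < t ∧ G₂.E e (t - G₁.tau))
  tau := G₁.tau + G₂.tau
  valid := by
    rintro e t (h | ⟨h1, h2⟩)
    · have := G₁.valid e t h; omega
    · have := G₂.valid e (t - G₁.tau) h2; omega

/-- The temporal graph with no time-edges and maximum label 0. -/
def emptyTG (V : Type*) : TemporalGraph V where
  E _ _ := False
  tau := 0
  valid := by intro e t h; exact h.elim

/-- `pow G n` is the `n`-fold concatenation `G ∘ G ∘ ⋯ ∘ G`. -/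
def pow (G : TemporalGraph V) : ℕ → TemporalGraph V
  | 0 => emptyTG V
  | n + 1 => (pow G n).concat G

/-- `G_{[a:b]}`: restriction to time-edges with labels in `[a, b]`. -/
def restrict (G : TemporalGraph V) (a b : ℕ) : TemporalGraph V where
  E e t := G.E e t ∧ a ≤ t ∧ t ≤ b
  tau := min b G.tau
  valid := by rintro e t ⟨h, ha, hb⟩; have := G.valid e t h; omega

/-- `G` (on the vertices of `W`) is an order-preserving temporal unit interval
graph with respect to the linear order on `V`: every layer satisfies the
sandwich property characterizing unit interval graphs compatible with the
order (if `{u,x}` is an edge and `u < v < x`, then `{v,x}` and `{u,v}` are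
edges of the same layer). -/
def OPUI [LinearOrder V] (G : TemporalGraph V) (W : Set V) : Prop :=
  ∀ t : ℕ, ∀ u ∈ W, ∀ v ∈ W, ∀ x ∈ W, u < v → v < x →
    G.E s(u, x) t → G.E s(v, x) t ∧ G.E s(u, v) t

/-- The number of descents (strict decreases between consecutive entries) of a
list of labels; this equals the number of maximal monotonically non-decreasing
intervals minus one. -/
def descents : List ℕ → ℕ
  | [] => 0
  | [_] => 0
  | a :: b :: l => (if b < a then 1 else 0) + descents (b :: l)

end TemporalGraph

open TemporalGraph in
private lemma OPUI_shrink {V : Type*} [LinearOrder V] {G : TemporalGraph V}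
    (hG : OPUI G Set.univ) {u x a b : V} {t : ℕ}
    (h : G.E s(u, x) t) (h1 : u ≤ a) (h2 : a < b) (h3 : b ≤ x) :
    G.E s(a, b) t := by
  have hax : G.E s(a, x) t := by
    rcases eq_or_lt_of_le h1 with rfl | hlt
    · exact h
    · exact (hG t u (Set.mem_univ _) a (Set.mem_univ _) x (Set.mem_univ _)
        hlt (lt_of_lt_of_le h2 h3) h).1
  rcases eq_or_lt_of_le h3 with rfl | hlt
  · exact hax
  · exact (hG t a (Set.mem_univ _) b (Set.mem_univ _) x (Set.mem_univ _)
      h2 hlt hax).2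

set_option maxHeartbeats 2000000 in
open TemporalGraph in
/-- in an order-preserving temporal unit interval graph, a
temporal `(v_i, v_j)`-separator is also a temporal `(v_{i'}, v_{j'})`-separator
whenever `v_{i'} ≤ v_i < v_j ≤ v_{j'}`. -/
theorem sep_extends_outward {V : Type*} [LinearOrder V] (G : TemporalGraph V)
    (hG : OPUI G Set.univ) (vi vj vi' vj' : V)
    (hii : vi' ≤ vi) (hij : vi < vj) (hjj : vj ≤ vj') (S : Set V)
    (hvi : vi ∉ S) (hvj : vj ∉ S) (hvi' : vi' ∉ S) (hvj' : vj' ∉ S)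
    (h : G.IsSep vi vj S) :
    G.IsSep vi' vj' S := by
  classical
  rintro ⟨vs, ts, hlen, hnd, hhead, hlast, hchain, hedge⟩
  apply h
  set k := ts.length with hk
  have hlen' : vs.length = k + 1 := hlen
  set W : ℕ → V := fun r => vs.getD r vi with hWdef
  set T : ℕ → ℕ := fun r => ts.getD r 0 with hTdef
  have hWget : ∀ r (hr : r < vs.length), W r = vs[r] := fun r hr =>
    List.getD_eq_getElem _ _ hr
  have hTget : ∀ r (hr : r < k), T r = ts[r] := fun r hr =>
    List.getD_eq_getElem _ _ hr
  have hW0 : W 0 = vi' := by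
    have h0 : (0:ℕ) < vs.length := by omega
    rw [hWget 0 h0]
    have := (List.head?_eq_getElem? (l := vs)).symm.trans hhead
    rw [List.getElem?_eq_getElem h0] at this
    exact Option.some_injective _ this
  have hWk : W k = vj' := by
    have h0 : k < vs.length := by omega
    rw [hWget k h0]
    have := (List.getLast?_eq_getElem? (l := vs)).symm.trans hlast
    rw [hlen'] at this
    simp only [Nat.add_sub_cancel] at this
    rw [List.getElem?_eq_getElem h0] at this
    exact Option.some_injective _ this
  have horig : ∀ r, r < k → (G.del S).E s(W r, W (r + 1)) (T r) := by
    intro r hr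
    have h1 : r < ts.length := hr
    have h2 : r + 1 < vs.length := by omega
    have := hedge r h1 h2
    simpa only [List.get_eq_getElem, ← hWget r (by omega), ← hWget (r+1) h2,
      ← hTget r hr] using this
  have hS : ∀ r, r < k → W r ∉ S ∧ W (r + 1) ∉ S := by
    intro r hr
    have := (horig r hr).2
    exact ⟨this _ (Sym2.mem_mk_left _ _), this _ (Sym2.mem_mk_right _ _)⟩
  -- find first crossing of vj
  have hex : ∃ i, i ≤ k ∧ vj ≤ W i := ⟨k, le_rfl, hWk ▸ hjj⟩
  obtain ⟨m, hmk, hmW, hm_min⟩ :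
      ∃ m, m ≤ k ∧ vj ≤ W m ∧ ∀ r, r < m → ¬(r ≤ k ∧ vj ≤ W r) :=
    ⟨Nat.find hex, (Nat.find_spec hex).1, (Nat.find_spec hex).2,
      fun r hr => Nat.find_min hex hr⟩
  have hm0 : 0 < m := by
    rcases Nat.eq_zero_or_pos m with h0 | h0
    · exfalso
      rw [h0, hW0] at hmW
      exact absurd (hmW.trans hii) (not_le.mpr hij)
    · exact h0
  set p := m - 1 with hpdef
  have hpk : p < k := by omega
  have hlt_vj : ∀ r, r ≤ p → W r < vj := by
    intro r hr
    have := hm_min r (by omega)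
    push_neg at this
    exact this (by omega)
  have hvj_le : vj ≤ W (p + 1) := by
    have hpm : p + 1 = m := by omega
    rw [hpm]; exact hmW
  -- find last drop below vi in the prefix
  obtain ⟨q, hq, hq_le, hgt_vi⟩ :
      ∃ q, W q ≤ vi ∧ q ≤ p ∧ ∀ r, q < r → r ≤ p → vi < W r := by
    have hQ0 : (fun i => W i ≤ vi) 0 := by simp only; rw [hW0]; exact hii
    exact ⟨Nat.findGreatest (fun i => W i ≤ vi) p,
      Nat.findGreatest_spec (P := fun i => W i ≤ vi) (Nat.zero_le p) hQ0,
      Nat.findGreatest_le p,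
      fun r h1 h2 => lt_of_not_ge
        (Nat.findGreatest_is_greatest (P := fun i => W i ≤ vi) h1 h2)⟩
  have hWq1 : vi < W (q + 1) := by
    rcases eq_or_lt_of_le hq_le with rfl | hlt
    · exact lt_of_lt_of_le hij hvj_le
    · exact hgt_vi _ (by omega) (by omega)
  set n := p - q with hndef
  have hqn : q + n = p := by omega
  have hmid : ∀ c, 1 ≤ c → c ≤ n → vi < W (q + c) ∧ W (q + c) < vj := fun c h1 h2 =>
    ⟨hgt_vi _ (by omega) (by omega), hlt_vj _ (by omega)⟩
  set f : ℕ → V := fun i => if i = 0 then vi else if i = n + 1 then vj else W (q + i)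
    with hfdef
  have hf0 : f 0 = vi := by simp [hfdef]
  have hfn1 : f (n + 1) = vj := by simp [hfdef]
  have hfmid : ∀ c, 1 ≤ c → c ≤ n → f c = W (q + c) := by
    intro c h1 h2
    simp only [hfdef]
    rw [if_neg (by omega), if_neg (by omega)]
  refine ⟨List.ofFn (fun i : Fin (n + 2) => f i.1),
    List.ofFn (fun i : Fin (n + 1) => T (q + i.1)), ?_, ?_, ?_, ?_, ?_, ?_⟩
  · simp
  · rw [List.nodup_ofFn]
    intro a b hab
    have ha := a.2
    have hb := b.2
    apply Fin.ext
    by_contra hne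
    simp only at hab
    -- analyze cases
    rcases Nat.eq_zero_or_pos a.1 with ha0 | ha0 <;>
      rcases Nat.eq_zero_or_pos b.1 with hb0 | hb0
    · omega
    · rw [ha0, hf0] at hab
      by_cases hbn : b.1 = n + 1
      · rw [hbn, hfn1] at hab; exact absurd hab (ne_of_lt hij)
      · rw [hfmid b.1 (by omega) (by omega)] at hab
        exact absurd hab (ne_of_lt (hmid b.1 (by omega) (by omega)).1)
    · rw [hb0, hf0] at hab
      by_cases han : a.1 = n + 1
      · rw [han, hfn1] at hab; exact absurd hab.symm (ne_of_lt hij)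
      · rw [hfmid a.1 (by omega) (by omega)] at hab
        exact absurd hab.symm (ne_of_lt (hmid a.1 (by omega) (by omega)).1)
    · by_cases han : a.1 = n + 1 <;> by_cases hbn : b.1 = n + 1
      · omega
      · rw [han, hfn1, hfmid b.1 (by omega) (by omega)] at hab
        exact absurd hab.symm (ne_of_lt (hmid b.1 (by omega) (by omega)).2)
      · rw [hbn, hfn1, hfmid a.1 (by omega) (by omega)] at hab
        exact absurd hab (ne_of_lt (hmid a.1 (by omega) (by omega)).2)
      · rw [hfmid a.1 (by omega) (by omega), hfmid b.1 (by omega) (by omega)] at hab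
        have hal : q + a.1 < vs.length := by omega
        have hbl : q + b.1 < vs.length := by omega
        rw [hWget _ hal, hWget _ hbl] at hab
        have := (hnd.getElem_inj_iff (hi := hal) (hj := hbl)).mp hab
        omega
  · rw [List.head?_eq_getElem?]
    rw [List.getElem?_eq_getElem (by simp)]
    simp [hf0]
  · rw [List.getLast?_eq_getElem?]
    simp only [List.length_ofFn, Nat.add_sub_cancel]
    rw [List.getElem?_eq_getElem (by simp only [List.length_ofFn]; omega)]
    simp only [List.getElem_ofFn, Option.some.injEq]
    exact hfn1
  · refine List.isChain_iff_getElem.mpr ?_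
    intro i hi
    simp only [List.length_ofFn] at hi
    simp only [List.get_eq_getElem, List.getElem_ofFn]
    have hchain' := List.isChain_iff_getElem.mp hchain (q + i) (by omega)
    rw [hTget (q + i) (by omega), hTget (q + (i + 1)) (by omega)]
    have he : q + (i + 1) = q + i + 1 := by omega
    simp only [he]
    exact hchain'
  · intro i hts hvs
    simp only [List.length_ofFn] at hts hvs
    simp only [List.get_eq_getElem, List.getElem_ofFn]
    have hEq : G.E s(W q, W (q + 1)) (T q) := (horig q (by omega)).1
    have hEp : G.E s(W p, W (p + 1)) (T p) := (horig p hpk).1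
    have hdel : ∀ (a b : V) (t : ℕ), G.E s(a, b) t → a ∉ S → b ∉ S →
        (G.del S).E s(a, b) t := by
      intro a b t hE hab hbS
      refine ⟨hE, fun v hv => ?_⟩
      rcases Sym2.mem_iff.mp hv with rfl | rfl
      · exact hab
      · exact hbS
    rcases Nat.eq_zero_or_pos i with rfl | hi0
    · simp only [hf0]
      rcases Nat.eq_zero_or_pos n with hn0 | hn0
      · rw [show (0:ℕ) + 1 = n + 1 by omega, hfn1]
        refine hdel _ _ _ (OPUI_shrink hG hEq hq hij ?_) hvi hvj
        rw [show q + 1 = p + 1 by omega]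
        exact hvj_le
      · rw [hfmid 1 le_rfl (by omega)]
        refine hdel _ _ _ (OPUI_shrink hG hEq hq hWq1 le_rfl) hvi ?_
        exact (hS q (by omega)).2
    · by_cases hin : i = n
      · subst hin
        rw [hfmid n (by omega) le_rfl, hfn1, hqn]
        refine hdel _ _ _ (OPUI_shrink hG hEp le_rfl (hlt_vj p le_rfl) hvj_le) ?_ hvj
        exact (hS p hpk).1
      · rw [hfmid i (by omega) (by omega), hfmid (i + 1) (by omega) (by omega),
          show q + (i + 1) = (q + i) + 1 by omega]
        exact horig (q + i) (by omega)
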